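/- arXiv:2208.00814 — 4 statements merged into one kernel-verified Lean document; each statement's English description precedes it below -/
import Mathlib

section
/- If A is an n×n complex matrix that is positive definite (i.e., A + A* is Hermitian positive definite), then for all α > 0 the spectral norm of (αI + A)⁻¹(αI − A) is strictly less than 1. -/
open Matrix
open scoped ComplexOrder
open scoped Matrix.Norms.L2Operator

lemma kellogg_aux_opNorm_lt_one {E : Type*} [NormedAddCommGroup E] [InnerProductSpace ℂ E]
    [FiniteDimensional ℂ E] (T : E →L[ℂ] E) (h : ∀ x : E, x ≠ 0 → ‖T x‖ < ‖x‖) : ‖T‖ < 1 := by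
  by_cases hne : (Metric.sphere (0 : E) 1).Nonempty
  · obtain ⟨x0, hx0, hmax⟩ := (isCompact_sphere (0 : E) 1).exists_isMaxOn hne
      ((T.continuous.norm).continuousOn)
    have hx0n : ‖x0‖ = 1 := by simpa using hx0
    have hx0ne : x0 ≠ 0 := by
      intro h0; rw [h0] at hx0n; simp at hx0n
    have hb : ‖T‖ ≤ ‖T x0‖ := by
      refine T.opNorm_le_bound (norm_nonneg _) fun x => ?_
      rcases eq_or_ne x 0 with rfl | hx
      · simp
      · have hnx : (0:ℝ) < ‖x‖ := norm_pos_iff.mpr hx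
        have hmem : (‖x‖⁻¹ : ℂ) • x ∈ Metric.sphere (0 : E) 1 := by
          simp [norm_smul, inv_mul_cancel₀ hnx.ne']
        have hsm : T ((‖x‖⁻¹ : ℂ) • x) = (‖x‖⁻¹ : ℂ) • T x := T.map_smul _ _
        have h2 : ‖x‖⁻¹ * ‖T x‖ ≤ ‖T x0‖ := by
          have h3 : ‖T ((‖x‖⁻¹ : ℂ) • x)‖ ≤ ‖T x0‖ := hmax hmem
          rw [hsm] at h3
          simp only [norm_smul, norm_inv, Complex.norm_real, Real.norm_eq_abs,
            abs_of_pos hnx] at h3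
          exact h3
        have h4 := mul_le_mul_of_nonneg_left h2 hnx.le
        rw [← mul_assoc, mul_inv_cancel₀ hnx.ne', one_mul] at h4
        linarith [h4]
    calc ‖T‖ ≤ ‖T x0‖ := hb
      _ < ‖x0‖ := h x0 hx0ne
      _ = 1 := hx0n
  · have hzero : ∀ x : E, x = 0 := by
      intro x
      by_contra hx
      have hnx : (0:ℝ) < ‖x‖ := norm_pos_iff.mpr hx
      exact hne ⟨(‖x‖⁻¹ : ℂ) • x, by simp [norm_smul, inv_mul_cancel₀ hnx.ne']⟩
    have : ‖T‖ ≤ 0 := T.opNorm_le_bound le_rfl fun x => by rw [hzero x]; simp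
    linarith

lemma kellogg_aux_key {n : ℕ} (A : Matrix (Fin n) (Fin n) ℂ)
    (hA : (A + Aᴴ).PosDef) (α : ℝ) (hα : 0 < α) (y : Fin n → ℂ) (hy : y ≠ 0) :
    ‖((WithLp.equiv 2 _).symm ((((α : ℂ) • (1 : Matrix (Fin n) (Fin n) ℂ)) - A) *ᵥ y) :
        EuclideanSpace ℂ (Fin n))‖ <
    ‖((WithLp.equiv 2 _).symm ((((α : ℂ) • (1 : Matrix (Fin n) (Fin n) ℂ)) + A) *ᵥ y) :
        EuclideanSpace ℂ (Fin n))‖ := by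
  set u : EuclideanSpace ℂ (Fin n) := (WithLp.equiv 2 _).symm ((α : ℂ) • y) with hu
  set w : EuclideanSpace ℂ (Fin n) := (WithLp.equiv 2 _).symm (A *ᵥ y) with hw
  have hBv : (((α : ℂ) • (1 : Matrix (Fin n) (Fin n) ℂ)) + A) *ᵥ y = (α : ℂ) • y + A *ᵥ y := by
    rw [Matrix.add_mulVec, Matrix.smul_mulVec, Matrix.one_mulVec]
  have hCv : (((α : ℂ) • (1 : Matrix (Fin n) (Fin n) ℂ)) - A) *ᵥ y = (α : ℂ) • y - A *ᵥ y := by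
    rw [Matrix.sub_mulVec, Matrix.smul_mulVec, Matrix.one_mulVec]
  have heq1 : ((WithLp.equiv 2 _).symm ((((α : ℂ) • (1 : Matrix (Fin n) (Fin n) ℂ)) + A) *ᵥ y) :
      EuclideanSpace ℂ (Fin n)) = u + w := by
    rw [hBv]; rfl
  have heq2 : ((WithLp.equiv 2 _).symm ((((α : ℂ) • (1 : Matrix (Fin n) (Fin n) ℂ)) - A) *ᵥ y) :
      EuclideanSpace ℂ (Fin n)) = u - w := by
    rw [hCv]; rfl
  rw [heq1, heq2]
  -- inner product positivity
  have hz : star ((α : ℂ) • y) ⬝ᵥ (A *ᵥ y) = (α : ℂ) * (star y ⬝ᵥ (A *ᵥ y)) := by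
    rw [star_smul, smul_dotProduct]
    simp [Complex.star_def, Complex.conj_ofReal]
  have hconj : star y ⬝ᵥ (Aᴴ *ᵥ y) = star (star y ⬝ᵥ (A *ᵥ y)) := by
    rw [Matrix.star_dotProduct, Matrix.star_mulVec, Matrix.conjTranspose_conjTranspose, ← Matrix.dotProduct_mulVec]
  have hpos := hA.re_dotProduct_pos hy
  rw [Matrix.add_mulVec, dotProduct_add, map_add, hconj] at hpos
  have hre : 0 < Complex.re (star y ⬝ᵥ (A *ᵥ y)) := by
    have : Complex.re (star (star y ⬝ᵥ (A *ᵥ y))) = Complex.re (star y ⬝ᵥ (A *ᵥ y)) := by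
      simp [Complex.star_def]
    simp only [RCLike.re_to_complex] at hpos
    linarith [hpos, this]
  have hinner : RCLike.re (inner ℂ u w) = α * Complex.re (star y ⬝ᵥ (A *ᵥ y)) := by
    rw [hu, hw, WithLp.equiv_symm_apply, EuclideanSpace.inner_toLp_toLp, dotProduct_comm, hz]
    simp [RCLike.re_to_complex]
  have hsq : ‖u - w‖ ^ 2 < ‖u + w‖ ^ 2 := by
    rw [@norm_add_sq ℂ, @norm_sub_sq ℂ, hinner]
    nlinarith [mul_pos hα hre]
  exact lt_of_pow_lt_pow_left₀ 2 (norm_nonneg _) hsq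

theorem kellogg_pd {n : ℕ} (A : Matrix (Fin n) (Fin n) ℂ)
    (hA : (A + Aᴴ).PosDef) :
    ∀ α : ℝ, 0 < α →
      ‖((α : ℂ) • (1 : Matrix (Fin n) (Fin n) ℂ) + A)⁻¹ *
        ((α : ℂ) • (1 : Matrix (Fin n) (Fin n) ℂ) - A)‖ < 1 := by
  intro α hα
  set B : Matrix (Fin n) (Fin n) ℂ := (α : ℂ) • 1 + A with hB
  set C : Matrix (Fin n) (Fin n) ℂ := (α : ℂ) • 1 - A with hC
  -- B is invertible
  have hBinj : Function.Injective B.mulVec := by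
    intro x y hxy
    by_contra hne
    have hsub : B *ᵥ (x - y) = 0 := by
      rw [Matrix.mulVec_sub, hxy, sub_self]
    have hxyne : x - y ≠ 0 := sub_ne_zero.mpr hne
    have := kellogg_aux_key A hA α hα (x - y) hxyne
    rw [← hB, hsub] at this
    simp at this
    exact absurd this (not_lt.mpr (norm_nonneg _))
  have hBunit : IsUnit B := Matrix.mulVec_injective_iff_isUnit.mp hBinj
  have hBdet : IsUnit B.det := (Matrix.isUnit_iff_isUnit_det B).mp hBunit
  have hcomm : C * B = B * C := by
    rw [hB, hC]
    noncomm_ring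
    module
  have hMB : (B⁻¹ * C) * B = C := by
    calc (B⁻¹ * C) * B = B⁻¹ * (C * B) := by rw [mul_assoc]
      _ = B⁻¹ * (B * C) := by rw [hcomm]
      _ = (B⁻¹ * B) * C := by rw [mul_assoc]
      _ = C := by rw [Matrix.nonsing_inv_mul B hBdet, one_mul]
  have : ‖B⁻¹ * C‖ = ‖toEuclideanCLM (n := Fin n) (𝕜 := ℂ) (B⁻¹ * C)‖ :=
    Matrix.cstar_norm_def _
  rw [this]
  apply kellogg_aux_opNorm_lt_one
  intro x hx
  set x' : Fin n → ℂ := WithLp.equiv 2 _ x with hx'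
  have hx'ne : x' ≠ 0 := by
    intro h0
    exact hx ((WithLp.equiv 2 _).injective (by rw [← hx', h0]; rfl))
  set y : Fin n → ℂ := B⁻¹ *ᵥ x' with hy
  have hBy : B *ᵥ y = x' := by
    rw [hy, Matrix.mulVec_mulVec, Matrix.mul_nonsing_inv B hBdet, Matrix.one_mulVec]
  have hyne : y ≠ 0 := by
    intro h0
    rw [h0, Matrix.mulVec_zero] at hBy
    exact hx'ne hBy.symm
  have hTx : toEuclideanCLM (n := Fin n) (𝕜 := ℂ) (B⁻¹ * C) x = (WithLp.equiv 2 _).symm (C *ᵥ y) := by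
    apply (WithLp.equiv 2 _).injective
    rw [show WithLp.equiv 2 _ (toEuclideanCLM (n := Fin n) (𝕜 := ℂ) (B⁻¹ * C) x) = (B⁻¹ * C) *ᵥ WithLp.equiv 2 _ x from rfl]
    simp only [Equiv.apply_symm_apply]
    rw [← hx', ← hBy, Matrix.mulVec_mulVec, Matrix.mulVec_mulVec, hMB, hy, Matrix.mulVec_mulVec]
  have hxeq : x = (WithLp.equiv 2 _).symm (B *ᵥ y) := by
    rw [hBy, hx']
    exact ((WithLp.equiv 2 _).symm_apply_apply x).symm
  rw [hTx]
  calc ‖((WithLp.equiv 2 _).symm (C *ᵥ y) : EuclideanSpace ℂ (Fin n))‖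
      < ‖((WithLp.equiv 2 _).symm (B *ᵥ y) : EuclideanSpace ℂ (Fin n))‖ :=
        kellogg_aux_key A hA α hα y hyne
    _ = ‖x‖ := by rw [← hxeq]
end

section
/- Let 𝒜 be the block 3×3 matrix [[A, Bᵀ, 0], [−B, 0, −Cᵀ], [0, C, 0]] with A ∈ ℝ^{n×n} symmetric positive definite, B ∈ ℝ^{m×n} of full row rank, and C ∈ ℝ^{l×m}. If 𝒜 is singular, then C is rank-deficient, i.e., rank(C) < l, i.e., null(Cᵀ) is nontrivial. -/
open Matrix

/-- The block 3x3 saddle point matrix [[A, Bᵀ, 0], [-B, 0, -Cᵀ], [0, C, 0]]. -/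
noncomputable def saddle {n m l : ℕ} (A : Matrix (Fin n) (Fin n) ℝ)
    (B : Matrix (Fin m) (Fin n) ℝ) (C : Matrix (Fin l) (Fin m) ℝ) :
    Matrix (Fin n ⊕ (Fin m ⊕ Fin l)) (Fin n ⊕ (Fin m ⊕ Fin l)) ℝ :=
  Matrix.fromBlocks A (Matrix.fromCols Bᵀ 0) (Matrix.fromRows (-B) 0)
    (Matrix.fromBlocks 0 (-Cᵀ) C 0)

/-- A matrix whose rank equals its number of columns has injective `mulVec`. -/
lemma aux_mulVec_injective {a b : ℕ} (M : Matrix (Fin a) (Fin b) ℝ)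
    (h : M.rank = b) : Function.Injective M.mulVec := by
  have hrn := LinearMap.finrank_range_add_finrank_ker M.mulVecLin
  rw [Module.finrank_fintype_fun_eq_card, Fintype.card_fin] at hrn
  have hrank : Module.finrank ℝ (LinearMap.range M.mulVecLin) = b := h
  have hker : Module.finrank ℝ (LinearMap.ker M.mulVecLin) = 0 := by omega
  have : LinearMap.ker M.mulVecLin = ⊥ := Submodule.finrank_eq_zero.mp hker
  have hinj : Function.Injective M.mulVecLin := LinearMap.ker_eq_bot.mp this
  exact hinj

theorem singular_implies_C_rank_deficient {n m l : ℕ}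
    (A : Matrix (Fin n) (Fin n) ℝ) (B : Matrix (Fin m) (Fin n) ℝ)
    (C : Matrix (Fin l) (Fin m) ℝ)
    (hA : A.PosDef) (hB : B.rank = m)
    (hsing : ¬ IsUnit (saddle A B C)) :
    C.rank < l := by
  by_contra hC
  push_neg at hC
  have hCl : C.rank = l := le_antisymm (C.rank_le_card_height.trans (by simp)) hC
  -- injectivity of Bᵀ and Cᵀ
  have hBT : Function.Injective Bᵀ.mulVec := by
    apply aux_mulVec_injective
    rw [Matrix.rank_transpose]; exact hB
  have hCT : Function.Injective Cᵀ.mulVec := by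
    apply aux_mulVec_injective
    rw [Matrix.rank_transpose]; exact hCl
  -- get a nonzero kernel vector
  rw [Matrix.isUnit_iff_isUnit_det] at hsing
  rw [isUnit_iff_ne_zero, not_ne_iff] at hsing
  have hdet : (saddle A B C).det = 0 := hsing
  obtain ⟨v, hv0, hv⟩ := Matrix.exists_mulVec_eq_zero_iff.mpr hdet
  set u : Fin n → ℝ := v ∘ Sum.inl with hu
  set p : Fin m → ℝ := v ∘ Sum.inr ∘ Sum.inl with hp
  set y : Fin l → ℝ := v ∘ Sum.inr ∘ Sum.inr with hy
  have hvel : v = Sum.elim u (Sum.elim p y) := by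
    funext x; rcases x with x | x | x <;> rfl
  rw [hvel] at hv
  unfold saddle at hv
  rw [Matrix.fromBlocks_mulVec] at hv
  simp only [Sum.elim_comp_inl, Sum.elim_comp_inr] at hv
  rw [Matrix.fromRows_mulVec, Matrix.fromBlocks_mulVec] at hv
  have h1 : A *ᵥ u + Bᵀ *ᵥ p = 0 := by
    funext i
    have := congrFun hv (Sum.inl i)
    simpa using this
  have h2 : B *ᵥ u + Cᵀ *ᵥ y = 0 := by
    funext i
    have := congrFun hv (Sum.inr (Sum.inl i))
    simp only [Matrix.neg_mulVec, Pi.add_apply, Pi.neg_apply, Pi.zero_apply] at this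
    have h := congrFun hv (Sum.inr (Sum.inl i))
    simp only [Sum.elim_inr, Sum.elim_inl, Pi.zero_apply, Pi.add_apply,
      Matrix.neg_mulVec, Pi.neg_apply, Matrix.zero_mulVec, zero_add,
      Sum.elim_comp_inl, Sum.elim_comp_inr] at h
    simp only [Pi.add_apply, Pi.zero_apply]
    linarith
  have h3 : C *ᵥ p = 0 := by
    funext i
    have := congrFun hv (Sum.inr (Sum.inr i))
    simpa using this
  -- u ⬝ A u = 0
  have hdot : u ⬝ᵥ (A *ᵥ u) = 0 := by
    have e1 : A *ᵥ u = -(Bᵀ *ᵥ p) := by linear_combination (norm := module) h1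
    have e2 : Cᵀ *ᵥ y = -(B *ᵥ u) := by linear_combination (norm := module) h2
    rw [e1, dotProduct_neg, Matrix.dotProduct_mulVec, Matrix.vecMul_transpose]
    rw [show B *ᵥ u = -(Cᵀ *ᵥ y) by rw [e2, neg_neg]]
    rw [neg_dotProduct, neg_neg, dotProduct_comm, Matrix.dotProduct_mulVec,
      Matrix.vecMul_transpose, h3, zero_dotProduct]
  have hu0 : u = 0 := by
    by_contra h
    have := hA.dotProduct_mulVec_pos h
    simp only [star_trivial] at this
    exact absurd hdot (ne_of_gt this)
  have hp0 : p = 0 := by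
    apply hBT
    rw [Matrix.mulVec_zero]
    have := h1
    rw [hu0, Matrix.mulVec_zero, zero_add] at this
    exact this
  have hy0 : y = 0 := by
    apply hCT
    rw [Matrix.mulVec_zero]
    have := h2
    rw [hu0, Matrix.mulVec_zero, zero_add] at this
    exact this
  apply hv0
  rw [hvel, hu0, hp0, hy0]
  funext x; rcases x with x | x | x <;> rfl
end

section
/- Let A ∈ ℝ^{n×n} be symmetric positive definite, B ∈ ℝ^{m×n} have full row rank, and C ∈ ℝ^{l×m} have full row rank. Then the block matrix 𝒜 = [[A, Bᵀ, 0], [−B, 0, −Cᵀ], [0, C, 0]] is nonsingular. -/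
open Matrix

lemma mulVec_inj_of_rank {a b : ℕ} (M : Matrix (Fin a) (Fin b) ℝ) (h : M.rank = b)
    {v : Fin b → ℝ} (hv : M *ᵥ v = 0) : v = 0 := by
  have hker : LinearMap.ker M.mulVecLin = ⊥ := by
    have h1 := M.mulVecLin.finrank_range_add_finrank_ker
    rw [show Module.finrank ℝ (LinearMap.range M.mulVecLin) = b from h,
      show Module.finrank ℝ (Fin b → ℝ) = b by simp] at h1
    have h2 : Module.finrank ℝ (LinearMap.ker M.mulVecLin) = 0 := by omega
    exact Submodule.finrank_eq_zero.mp h2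
  have : v ∈ LinearMap.ker M.mulVecLin := hv
  simpa [hker] using this

theorem nonsingular_saddle {n m l : ℕ}
    (A : Matrix (Fin n) (Fin n) ℝ) (B : Matrix (Fin m) (Fin n) ℝ)
    (C : Matrix (Fin l) (Fin m) ℝ)
    (hA : A.PosDef) (hB : B.rank = m) (hC : C.rank = l) :
    IsUnit (saddle A B C) := by
  rw [Matrix.isUnit_iff_isUnit_det, isUnit_iff_ne_zero]
  intro hdet
  obtain ⟨v, hv, hmul⟩ := Matrix.exists_mulVec_eq_zero_iff.mpr hdet
  set x : Fin n → ℝ := fun i => v (Sum.inl i) with hx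
  set y : Fin m → ℝ := fun i => v (Sum.inr (Sum.inl i)) with hy
  set z : Fin l → ℝ := fun i => v (Sum.inr (Sum.inr i)) with hz
  have hvdecomp : v = Sum.elim x (Sum.elim y z) := by
    funext i; rcases i with i | i | i <;> rfl
  rw [hvdecomp] at hmul
  unfold saddle at hmul
  rw [Matrix.fromBlocks_mulVec] at hmul
  simp only [Sum.elim_comp_inl, Sum.elim_comp_inr] at hmul
  rw [Matrix.fromCols_mulVec_sumElim, Matrix.fromRows_mulVec,
    Matrix.fromBlocks_mulVec] at hmul
  -- extract equations
  have e1 : A *ᵥ x + Bᵀ *ᵥ y = 0 := by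
    funext i
    have := congrFun hmul (Sum.inl i)
    simpa using this
  have e2 : -(B *ᵥ x) - Cᵀ *ᵥ z = 0 := by
    funext i
    have := congrFun hmul (Sum.inr (Sum.inl i))
    simpa [Matrix.neg_mulVec, sub_eq_add_neg] using this
  have e3 : C *ᵥ y = 0 := by
    funext i
    have := congrFun hmul (Sum.inr (Sum.inr i))
    simpa using this
  -- B *ᵥ x = - Cᵀ *ᵥ z
  have hBx : B *ᵥ x = -(Cᵀ *ᵥ z) := by
    funext i
    have := congrFun e2 i
    simp only [Pi.sub_apply, Pi.neg_apply, Pi.zero_apply] at this ⊢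
    linarith
  -- x ⬝ᵥ (Bᵀ *ᵥ y) = (B *ᵥ x) ⬝ᵥ y
  have key : x ⬝ᵥ (A *ᵥ x) = 0 := by
    have h1 : x ⬝ᵥ (A *ᵥ x) + x ⬝ᵥ (Bᵀ *ᵥ y) = 0 := by
      have := congrArg (fun w => x ⬝ᵥ w) e1
      simpa [dotProduct_add] using this
    have h2 : x ⬝ᵥ (Bᵀ *ᵥ y) = (B *ᵥ x) ⬝ᵥ y := by
      rw [Matrix.dotProduct_mulVec, Matrix.vecMul_transpose]
    have h3 : (B *ᵥ x) ⬝ᵥ y = -((Cᵀ *ᵥ z) ⬝ᵥ y) := by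
      rw [hBx, neg_dotProduct]
    have h4 : (Cᵀ *ᵥ z) ⬝ᵥ y = z ⬝ᵥ (C *ᵥ y) := by
      rw [Matrix.mulVec_transpose, ← Matrix.dotProduct_mulVec]
    rw [h4, e3, dotProduct_zero, neg_zero] at h3
    rw [h2, h3, add_zero] at h1
    exact h1
  -- x = 0 from posdef
  have hx0 : x = 0 := by
    by_contra hne
    have := hA.dotProduct_mulVec_pos hne
    simp only [RCLike.star_def, star_trivial] at this
    rw [key] at this
    exact lt_irrefl 0 this
  -- then Bᵀ y = 0, so y = 0
  have hy0 : y = 0 := by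
    apply mulVec_inj_of_rank Bᵀ (by rw [Matrix.rank_transpose]; exact hB)
    have := e1
    rw [hx0, Matrix.mulVec_zero, zero_add] at this
    exact this
  have hz0 : z = 0 := by
    apply mulVec_inj_of_rank Cᵀ (by rw [Matrix.rank_transpose]; exact hC)
    have := hBx
    rw [hx0, Matrix.mulVec_zero] at this
    have : Cᵀ *ᵥ z = 0 := by
      have h := this
      funext i
      have := congrFun h i
      simpa using this.symm
    exact this
  apply hv
  rw [hvdecomp, hx0, hy0, hz0]
  funext i; rcases i with i | i | i <;> rfl
end

section
/- Let 𝒜₁ = [[A, Bᵀ, 0], [−B, 0, 0], [0, 0, 0]] with A SPD and B of full row rank, and let α > 0. If x is an eigenvector of 𝒱_α = (αI + 𝒜₁)⁻¹(αI − 𝒜₁) with eigenvalue λ and x ∉ null(𝒜₁), then |λ| < 1. -/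
open Matrix

/-- The block 3x3 matrix [[A, Bᵀ, 0], [-B, 0, 0], [0, 0, 0]], mapped to ℂ. -/
noncomputable def saddleA1C {n m l : ℕ} (A : Matrix (Fin n) (Fin n) ℝ)
    (B : Matrix (Fin m) (Fin n) ℝ) :
    Matrix (Fin n ⊕ (Fin m ⊕ Fin l)) (Fin n ⊕ (Fin m ⊕ Fin l)) ℂ :=
  (Matrix.fromBlocks A (Matrix.fromCols Bᵀ 0) (Matrix.fromRows (-B) 0)
    0).map Complex.ofReal

lemma re_dot_ofReal_mulVec {k n : ℕ} (C : Matrix (Fin k) (Fin n) ℝ) (u : Fin k → ℂ)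
    (w : Fin n → ℂ) :
    (star u ⬝ᵥ (C.map Complex.ofReal) *ᵥ w).re =
      ∑ i, ∑ j, C i j * ((u i).re * (w j).re + (u i).im * (w j).im) := by
  simp only [dotProduct, mulVec, Matrix.map_apply, Finset.mul_sum, Complex.re_sum, Pi.star_apply]
  refine Finset.sum_congr rfl fun i _ => Finset.sum_congr rfl fun j _ => ?_
  simp [Complex.mul_re, Complex.mul_im]
  ring

lemma dot_self_re {ι : Type*} [Fintype ι] (v : ι → ℂ) :
    (star v ⬝ᵥ v).re = ∑ i, Complex.normSq (v i) := by
  simp only [dotProduct, Pi.star_apply, Complex.re_sum]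
  refine Finset.sum_congr rfl fun i _ => ?_
  rw [mul_comm, Complex.star_def, Complex.mul_conj, Complex.ofReal_re]

lemma quad_re_eq {n : ℕ} (A : Matrix (Fin n) (Fin n) ℝ) (v : Fin n → ℂ) :
    (star v ⬝ᵥ (A.map Complex.ofReal) *ᵥ v).re =
      (fun i => (v i).re) ⬝ᵥ A *ᵥ (fun i => (v i).re) +
      (fun i => (v i).im) ⬝ᵥ A *ᵥ (fun i => (v i).im) := by
  rw [re_dot_ofReal_mulVec]
  simp only [dotProduct, mulVec, Finset.mul_sum, ← Finset.sum_add_distrib]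
  refine Finset.sum_congr rfl fun i _ => Finset.sum_congr rfl fun j _ => ?_
  ring

lemma quad_re_nonneg {n : ℕ} {A : Matrix (Fin n) (Fin n) ℝ} (hA : A.PosDef) (v : Fin n → ℂ) :
    0 ≤ (star v ⬝ᵥ (A.map Complex.ofReal) *ᵥ v).re := by
  rw [quad_re_eq]
  have h1 := hA.posSemidef.dotProduct_mulVec_nonneg (fun i => (v i).re)
  have h2 := hA.posSemidef.dotProduct_mulVec_nonneg (fun i => (v i).im)
  simp only [star_trivial] at h1 h2
  linarith

lemma quad_re_zero {n : ℕ} {A : Matrix (Fin n) (Fin n) ℝ} (hA : A.PosDef) (v : Fin n → ℂ)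
    (h : (star v ⬝ᵥ (A.map Complex.ofReal) *ᵥ v).re = 0) : v = 0 := by
  rw [quad_re_eq] at h
  have h1 := hA.posSemidef.dotProduct_mulVec_nonneg (fun i => (v i).re)
  have h2 := hA.posSemidef.dotProduct_mulVec_nonneg (fun i => (v i).im)
  simp only [star_trivial] at h1 h2
  have hre : (fun i => (v i).re) = 0 := by
    by_contra hne
    have := hA.dotProduct_mulVec_pos hne
    simp only [star_trivial] at this
    linarith
  have him : (fun i => (v i).im) = 0 := by
    by_contra hne
    have := hA.dotProduct_mulVec_pos hne
    simp only [star_trivial] at this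
    linarith
  funext i
  have : (v i).re = 0 := congrFun hre i
  have : (v i).im = 0 := congrFun him i
  exact Complex.ext (congrFun hre i) (congrFun him i)

lemma skew_re_zero {m n : ℕ} (B : Matrix (Fin m) (Fin n) ℝ) (u : Fin n → ℂ) (w : Fin m → ℂ) :
    (star u ⬝ᵥ ((Bᵀ).map Complex.ofReal) *ᵥ w).re = (star w ⬝ᵥ (B.map Complex.ofReal) *ᵥ u).re := by
  rw [re_dot_ofReal_mulVec, re_dot_ofReal_mulVec, Finset.sum_comm]
  refine Finset.sum_congr rfl fun j _ => Finset.sum_congr rfl fun i _ => ?_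
  simp only [transpose_apply]
  ring

lemma fromColumns_map' {m n₁ n₂ : Type*} {α β : Type*} (A : Matrix m n₁ α) (B : Matrix m n₂ α)
    (f : α → β) : (fromCols A B).map f = fromCols (A.map f) (B.map f) := by
  ext i (j | j) <;> rfl

lemma fromRows_map' {m₁ m₂ n : Type*} {α β : Type*} (A : Matrix m₁ n α) (B : Matrix m₂ n α)
    (f : α → β) : (fromRows A B).map f = fromRows (A.map f) (B.map f) := by
  ext (i | i) j <;> rfl

lemma sum_elim_eq {n m l : ℕ} (v : Fin n ⊕ (Fin m ⊕ Fin l) → ℂ) :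
    v = Sum.elim (v ∘ Sum.inl) (Sum.elim (v ∘ Sum.inr ∘ Sum.inl) (v ∘ Sum.inr ∘ Sum.inr)) := by
  funext i
  rcases i with i | i
  · rfl
  · rcases i with i | i <;> rfl

lemma saddle_mulVec {n m l : ℕ} (A : Matrix (Fin n) (Fin n) ℝ) (B : Matrix (Fin m) (Fin n) ℝ)
    (v : Fin n ⊕ (Fin m ⊕ Fin l) → ℂ) :
    saddleA1C (l := l) A B *ᵥ v =
      Sum.elim ((A.map Complex.ofReal) *ᵥ (v ∘ Sum.inl) +
          ((Bᵀ).map Complex.ofReal) *ᵥ (v ∘ Sum.inr ∘ Sum.inl))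
        (Sum.elim (-((B.map Complex.ofReal) *ᵥ (v ∘ Sum.inl))) 0) := by
  conv_lhs => rw [sum_elim_eq v]
  unfold saddleA1C
  rw [fromBlocks_map, fromColumns_map', fromRows_map', fromBlocks_mulVec]
  simp only [Sum.elim_comp_inl, Sum.elim_comp_inr]
  rw [fromCols_mulVec_sumElim, fromRows_mulVec]
  have hneg : ((-B : Matrix (Fin m) (Fin n) ℝ)).map Complex.ofReal
      = -(B.map Complex.ofReal) := by
    ext i j; simp
  simp only [Matrix.map_zero _ Complex.ofReal_zero, hneg, zero_mulVec, add_zero]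
  funext i
  rcases i with i | i
  · simp
  · rcases i with i | i <;> simp [neg_mulVec]

lemma star_sum_elim {n m l : ℕ} (v : Fin n ⊕ (Fin m ⊕ Fin l) → ℂ) :
    star v = Sum.elim (star (v ∘ Sum.inl))
      (Sum.elim (star (v ∘ Sum.inr ∘ Sum.inl)) (star (v ∘ Sum.inr ∘ Sum.inr))) := by
  funext i
  rcases i with i | i
  · rfl
  · rcases i with i | i <;> rfl

lemma saddle_quad_re {n m l : ℕ} (A : Matrix (Fin n) (Fin n) ℝ) (B : Matrix (Fin m) (Fin n) ℝ)
    (v : Fin n ⊕ (Fin m ⊕ Fin l) → ℂ) :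
    (star v ⬝ᵥ saddleA1C (l := l) A B *ᵥ v).re =
      (star (v ∘ Sum.inl) ⬝ᵥ (A.map Complex.ofReal) *ᵥ (v ∘ Sum.inl)).re := by
  rw [saddle_mulVec, star_sum_elim, sumElim_dotProduct_sumElim, sumElim_dotProduct_sumElim,
    dotProduct_add, dotProduct_neg, dotProduct_zero]
  have hs := skew_re_zero B (v ∘ Sum.inl) (v ∘ Sum.inr ∘ Sum.inl)
  simp only [Complex.add_re, Complex.neg_re, Complex.zero_re]
  linarith

lemma dot_self_im {ι : Type*} [Fintype ι] (v : ι → ℂ) : (star v ⬝ᵥ v).im = 0 := by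
  simp only [dotProduct, Pi.star_apply, Complex.im_sum]
  refine Finset.sum_eq_zero fun i _ => ?_
  rw [mul_comm, Complex.star_def, Complex.mul_conj]
  simp

lemma dot_self_re_nonneg {ι : Type*} [Fintype ι] (v : ι → ℂ) : 0 ≤ (star v ⬝ᵥ v).re := by
  rw [dot_self_re]
  exact Finset.sum_nonneg fun i _ => Complex.normSq_nonneg _

lemma dot_self_re_pos {ι : Type*} [Fintype ι] {v : ι → ℂ} (hv : v ≠ 0) :
    0 < (star v ⬝ᵥ v).re := by
  rcases (dot_self_re_nonneg v).lt_or_eq with h | h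
  · exact h
  · exfalso
    apply hv
    rw [dot_self_re] at h
    funext i
    have := (Finset.sum_eq_zero_iff_of_nonneg
      (fun i _ => Complex.normSq_nonneg (v i))).mp h.symm i (Finset.mem_univ i)
    exact Complex.normSq_eq_zero.mp this

lemma P_mulVec_eq {n m l : ℕ} (A : Matrix (Fin n) (Fin n) ℝ) (B : Matrix (Fin m) (Fin n) ℝ)
    (α : ℝ) (v : Fin n ⊕ (Fin m ⊕ Fin l) → ℂ) :
    (((α : ℂ) • (1 : Matrix (Fin n ⊕ (Fin m ⊕ Fin l)) (Fin n ⊕ (Fin m ⊕ Fin l)) ℂ) +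
      saddleA1C (l := l) A B)) *ᵥ v = (α : ℂ) • v + saddleA1C (l := l) A B *ᵥ v := by
  rw [add_mulVec, smul_mulVec, one_mulVec]

lemma ofReal_mul_re (a : ℝ) (z : ℂ) : ((a : ℂ) * z).re = a * z.re := by
  simp [Complex.mul_re]

lemma P_isUnit {n m l : ℕ} {A : Matrix (Fin n) (Fin n) ℝ} (B : Matrix (Fin m) (Fin n) ℝ)
    (hA : A.PosDef) {α : ℝ} (hα : 0 < α) :
    IsUnit (((α : ℂ) • (1 : Matrix (Fin n ⊕ (Fin m ⊕ Fin l)) (Fin n ⊕ (Fin m ⊕ Fin l)) ℂ) +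
      saddleA1C (l := l) A B)) := by
  rw [← Matrix.mulVec_injective_iff_isUnit]
  have key : ∀ v, (((α : ℂ) • 1 + saddleA1C (l := l) A B)) *ᵥ v = 0 → v = 0 := by
    intro v hv
    rw [P_mulVec_eq] at hv
    have h0 : (star v ⬝ᵥ ((α : ℂ) • v + saddleA1C (l := l) A B *ᵥ v)).re = 0 := by
      rw [hv]; simp
    rw [dotProduct_add, dotProduct_smul, Complex.add_re, smul_eq_mul, ofReal_mul_re,
      saddle_quad_re] at h0
    have h1 := quad_re_nonneg hA (v ∘ Sum.inl)
    have h2 := dot_self_re_nonneg v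
    by_contra hne
    have h3 := dot_self_re_pos hne
    nlinarith
  intro v w h
  have : (((α : ℂ) • 1 + saddleA1C (l := l) A B)) *ᵥ (v - w) = 0 := by
    rw [mulVec_sub, h, sub_self]
  have := key _ this
  exact sub_eq_zero.mp this

theorem eigenvalue_V_strict {n m l : ℕ}
    (A : Matrix (Fin n) (Fin n) ℝ) (B : Matrix (Fin m) (Fin n) ℝ)
    (hA : A.PosDef) (hB : B.rank = m)
    (α : ℝ) (hα : 0 < α) (lam : ℂ) (x : Fin n ⊕ (Fin m ⊕ Fin l) → ℂ)
    (hx : x ≠ 0)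
    (heig : (((α : ℂ) • (1 : Matrix (Fin n ⊕ (Fin m ⊕ Fin l)) (Fin n ⊕ (Fin m ⊕ Fin l)) ℂ) +
        saddleA1C (l := l) A B)⁻¹ * ((α : ℂ) • 1 - saddleA1C (l := l) A B)).mulVec x = lam • x)
    (hker : (saddleA1C (l := l) A B).mulVec x ≠ 0) :
    ‖lam‖ < 1 := by
  set M := saddleA1C (l := l) A B with hM
  set P := ((α : ℂ) • (1 : Matrix (Fin n ⊕ (Fin m ⊕ Fin l)) (Fin n ⊕ (Fin m ⊕ Fin l)) ℂ) + M)
    with hPdef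
  set Q := ((α : ℂ) • (1 : Matrix (Fin n ⊕ (Fin m ⊕ Fin l)) (Fin n ⊕ (Fin m ⊕ Fin l)) ℂ) - M)
    with hQdef
  have hP : IsUnit P := P_isUnit B hA hα
  have hPdet : IsUnit P.det := (Matrix.isUnit_iff_isUnit_det _).mp hP
  -- Q *ᵥ x = lam • (P *ᵥ x)
  have hQP : Q *ᵥ x = lam • (P *ᵥ x) := by
    have h1 : P *ᵥ ((P⁻¹ * Q) *ᵥ x) = P *ᵥ (lam • x) := by rw [heig]
    rwa [mulVec_mulVec, ← mul_assoc, Matrix.mul_nonsing_inv _ hPdet, one_mul,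
      mulVec_smul] at h1
  set y := M *ᵥ x with hy
  have hE2 : ∀ i, ((1 - lam) * (α : ℂ)) * x i = (1 + lam) * y i := by
    intro i
    have h := congrFun hQP i
    have hPx : (P *ᵥ x) i = (α : ℂ) * x i + y i := by
      have := congrFun (P_mulVec_eq (l := l) A B α x) i
      simpa [Pi.smul_apply, smul_eq_mul, hPdef, hM, hy] using this
    have hQx : (Q *ᵥ x) i = (α : ℂ) * x i - y i := by
      rw [hQdef, sub_mulVec, smul_mulVec, one_mulVec]
      simp [Pi.smul_apply, smul_eq_mul, hy]
    rw [hQx, Pi.smul_apply, hPx, smul_eq_mul] at h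
    linear_combination h
  have hlam1 : (1 : ℂ) + lam ≠ 0 := by
    intro h
    apply hx
    funext i
    have h2 := hE2 i
    rw [h, zero_mul] at h2
    have hlam : lam = -1 := by linear_combination h
    rw [hlam] at h2
    have : (2 : ℂ) * (α : ℂ) * x i = 0 := by linear_combination h2
    have hα2 : (2 : ℂ) * (α : ℂ) ≠ 0 := by
      simp [Complex.ofReal_ne_zero, ne_of_gt hα]
    exact (mul_eq_zero.mp this).resolve_left hα2
  set μ : ℂ := (1 - lam) * (α : ℂ) / (1 + lam) with hμdef
  have hMx : ∀ i, y i = μ * x i := by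
    intro i
    rw [hμdef]
    field_simp
    linear_combination -hE2 i
  have hμ0 : μ ≠ 0 := by
    intro h
    apply hker
    funext i
    have := hMx i
    rw [h, zero_mul] at this
    exact this
  -- quadratic form
  have hq : (star x ⬝ᵥ y).re = μ.re * (star x ⬝ᵥ x).re := by
    have hyx : y = μ • x := funext fun i => by rw [hMx i]; rfl
    rw [hyx, dotProduct_smul, smul_eq_mul, Complex.mul_re, dot_self_im, mul_zero, sub_zero]
  have hqre : (star x ⬝ᵥ y).re = (star (x ∘ Sum.inl) ⬝ᵥ (A.map Complex.ofReal) *ᵥ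
      (x ∘ Sum.inl)).re := saddle_quad_re A B x
  have hspos : 0 < (star x ⬝ᵥ x).re := dot_self_re_pos hx
  have hμre : 0 < μ.re := by
    rcases lt_or_ge 0 μ.re with h | h
    · exact h
    have hnn := quad_re_nonneg hA (x ∘ Sum.inl)
    have hz : (star (x ∘ Sum.inl) ⬝ᵥ (A.map Complex.ofReal) *ᵥ (x ∘ Sum.inl)).re = 0 := by
      nlinarith [hq, hqre]
    have hx1 : x ∘ Sum.inl = 0 := quad_re_zero hA _ hz
    exfalso
    apply hx
    have hyv := saddle_mulVec (l := l) A B x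
    rw [← hy] at hyv
    funext i
    rcases i with i | i
    · exact congrFun hx1 i
    · rcases i with i | i
      · have h1 : y (Sum.inr (Sum.inl i)) = 0 := by
          rw [hyv]
          simp [hx1]
        have := hMx (Sum.inr (Sum.inl i))
        rw [h1] at this
        exact ((mul_eq_zero.mp this.symm).resolve_left hμ0)
      · have h1 : y (Sum.inr (Sum.inr i)) = 0 := by
          rw [hyv]
          simp
        have := hMx (Sum.inr (Sum.inr i))
        rw [h1] at this
        exact ((mul_eq_zero.mp this.symm).resolve_left hμ0)
  -- scalar identity
  obtain ⟨i, hi⟩ := Function.ne_iff.mp hx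
  have hscal : (1 - lam) * (α : ℂ) = (1 + lam) * μ := by
    have h1 := hE2 i
    rw [hMx i] at h1
    have : ((1 - lam) * (α : ℂ)) * x i = ((1 + lam) * μ) * x i := by linear_combination h1
    exact mul_right_cancel₀ hi this
  have hlamid : lam * ((α : ℂ) + μ) = (α : ℂ) - μ := by linear_combination -hscal
  have hαμ : (α : ℂ) + μ ≠ 0 := by
    intro h
    have := congrArg Complex.re h
    simp [Complex.add_re, Complex.ofReal_re] at this
    linarith
  have habs : ‖lam‖ * ‖(α : ℂ) + μ‖ = ‖(α : ℂ) - μ‖ := by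
    rw [← norm_mul, hlamid]
  have habspos : 0 < ‖(α : ℂ) + μ‖ := by
    simpa using hαμ
  have hlt : ‖(α : ℂ) - μ‖ < ‖(α : ℂ) + μ‖ := by
    have h2 : ‖(α : ℂ) - μ‖ ^ 2 < ‖(α : ℂ) + μ‖ ^ 2 := by
      rw [Complex.sq_norm, Complex.sq_norm, Complex.normSq_apply, Complex.normSq_apply]
      simp only [Complex.sub_re, Complex.sub_im, Complex.add_re, Complex.add_im,
        Complex.ofReal_re, Complex.ofReal_im]
      nlinarith
    exact lt_of_pow_lt_pow_left₀ 2 (norm_nonneg _) h2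
  calc ‖lam‖ = ‖(α : ℂ) - μ‖ / ‖(α : ℂ) + μ‖ := by
        field_simp [ne_of_gt habspos] at habs ⊢
        linarith [habs]
      _ < 1 := (div_lt_one habspos).mpr hlt
end
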